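/- Let θ_1 ≤ λ_1 ≤ λ_2 ≤ θ_2 be positive reals with λ_1+λ_2 = θ_1+θ_2, and let 0 < a ≤ θ_1/λ_2 and b ≥ 0. Define V(x) = F̄_Y(x) - F̄_X(ax+b). Then V changes sign at most once on [0,∞), and the sign pattern is '+' followed by '−': there exists t ∈ [0,∞] with V(x) ≥ 0 for 0 ≤ x < t and V(x) ≤ 0 for x > t, with V(0) > 0 when b > 0. -/

import Mathlib

open Real

lemma term_le' (p n B A u v : ℝ) (hp : 0 ≤ p) (hn : 0 ≤ n) (hBA : B ≤ A) (huv : u ≤ v) :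
    p * Real.exp (B * v) * (n * Real.exp (A * u)) ≤ p * Real.exp (B * u) * (n * Real.exp (A * v)) := by
  have h1 : Real.exp (B * v) * Real.exp (A * u) ≤ Real.exp (B * u) * Real.exp (A * v) := by
    rw [← Real.exp_add, ← Real.exp_add]
    exact Real.exp_le_exp.2 (by nlinarith)
  calc p * Real.exp (B * v) * (n * Real.exp (A * u))
      = p * n * (Real.exp (B * v) * Real.exp (A * u)) := by ring
    _ ≤ p * n * (Real.exp (B * u) * Real.exp (A * v)) :=
        mul_le_mul_of_nonneg_left h1 (mul_nonneg hp hn)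
    _ = p * Real.exp (B * u) * (n * Real.exp (A * v)) := by ring

lemma ratio_mono' (p1 p2 p3 n1 n2 B1 B2 B3 A1 A2 u v : ℝ)
    (hp1 : 0 ≤ p1) (hp2 : 0 ≤ p2) (hp3 : 0 ≤ p3) (hn1 : 0 ≤ n1) (hn2 : 0 ≤ n2)
    (h11 : B1 ≤ A1) (h12 : B1 ≤ A2) (h21 : B2 ≤ A1) (h22 : B2 ≤ A2)
    (h31 : B3 ≤ A1) (h32 : B3 ≤ A2) (huv : u ≤ v)
    (hNu : 0 < n1 * Real.exp (A1 * u) + n2 * Real.exp (A2 * u))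
    (h : p1 * Real.exp (B1 * u) + p2 * Real.exp (B2 * u) + p3 * Real.exp (B3 * u)
        ≤ n1 * Real.exp (A1 * u) + n2 * Real.exp (A2 * u)) :
    p1 * Real.exp (B1 * v) + p2 * Real.exp (B2 * v) + p3 * Real.exp (B3 * v)
        ≤ n1 * Real.exp (A1 * v) + n2 * Real.exp (A2 * v) := by
  set Pu := p1 * Real.exp (B1 * u) + p2 * Real.exp (B2 * u) + p3 * Real.exp (B3 * u) with hPu
  set Pv := p1 * Real.exp (B1 * v) + p2 * Real.exp (B2 * v) + p3 * Real.exp (B3 * v) with hPv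
  set Nu := n1 * Real.exp (A1 * u) + n2 * Real.exp (A2 * u) with hNu'
  set Nv := n1 * Real.exp (A1 * v) + n2 * Real.exp (A2 * v) with hNv'
  have e11 := term_le' p1 n1 B1 A1 u v hp1 hn1 h11 huv
  have e12 := term_le' p1 n2 B1 A2 u v hp1 hn2 h12 huv
  have e21 := term_le' p2 n1 B2 A1 u v hp2 hn1 h21 huv
  have e22 := term_le' p2 n2 B2 A2 u v hp2 hn2 h22 huv
  have e31 := term_le' p3 n1 B3 A1 u v hp3 hn1 h31 huv
  have e32 := term_le' p3 n2 B3 A2 u v hp3 hn2 h32 huv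
  have cross : Pv * Nu ≤ Pu * Nv := by
    rw [hPu, hPv, hNu', hNv']
    nlinarith [e11, e12, e21, e22, e31, e32]
  have hNv : 0 ≤ Nv := by
    rw [hNv']
    positivity
  have step2 : Pu * Nv ≤ Nu * Nv := mul_le_mul_of_nonneg_right h hNv
  have : Nu * Pv ≤ Nu * Nv := by nlinarith [cross, step2]
  exact le_of_mul_le_mul_left this hNu

lemma aux_exp' (k y : ℝ) : HasDerivAt (fun t : ℝ => Real.exp (k * t)) (k * Real.exp (k * y)) y := by
  have h := ((hasDerivAt_id y).const_mul k).exp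
  convert h using 1
  show k * Real.exp (k * y) = Real.exp (k * y) * (k * 1); ring; rfl

set_option maxHeartbeats 2000000 in
theorem stmt_18 (θ₁ θ₂ lam₁ lam₂ a b : ℝ) (h0 : 0 < θ₁) (h1 : θ₁ ≤ lam₁) (h2 : lam₁ ≤ lam₂)
    (h3 : lam₂ ≤ θ₂) (hsum : lam₁ + lam₂ = θ₁ + θ₂) (ha0 : 0 < a) (ha : a ≤ θ₁ / lam₂)
    (hθlam : θ₁ / lam₂ < 1) (hb : 0 ≤ b)
    (V : ℝ → ℝ)
    (hV : ∀ x, V x = (exp (-θ₁ * x) + exp (-θ₂ * x) - exp (-(θ₁ + θ₂) * x)) -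
      (exp (-lam₁ * (a * x + b)) + exp (-lam₂ * (a * x + b)) -
        exp (-(lam₁ + lam₂) * (a * x + b)))) :
    ((∀ x : ℝ, 0 ≤ x → 0 ≤ V x) ∨
      ∃ t : ℝ, 0 ≤ t ∧ ∀ x : ℝ, 0 ≤ x → (x < t → 0 ≤ V x) ∧ (t < x → V x ≤ 0)) ∧
    (0 < b → 0 < V 0) := by
  have hl1 : 0 < lam₁ := lt_of_lt_of_le h0 h1
  have hl2 : 0 < lam₂ := lt_of_lt_of_le hl1 h2
  have hθ2 : 0 < θ₂ := lt_of_lt_of_le hl2 h3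
  have halam2 : a * lam₂ ≤ θ₁ := (le_div_iff₀ hl2).1 ha
  have halam1 : a * lam₁ ≤ θ₁ := le_trans (by nlinarith) halam2
  -- the two constants
  set c₁ : ℝ := Real.exp (-lam₁ * b) with hc₁def
  set c₂ : ℝ := Real.exp (-lam₂ * b) with hc₂def
  have hc₁pos : 0 < c₁ := Real.exp_pos _
  have hc₂pos : 0 < c₂ := Real.exp_pos _
  have hc₁le : c₁ ≤ 1 := Real.exp_le_one_iff.2 (by nlinarith)
  have hc₂le : c₂ ≤ 1 := Real.exp_le_one_iff.2 (by nlinarith)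
  -- value at 0
  have hV0eq : V 0 = (1 - c₁) * (1 - c₂) := by
    rw [hV 0]
    have : -(lam₁ + lam₂) * (a * 0 + b) = -lam₁ * b + -lam₂ * b := by ring
    rw [this, Real.exp_add]
    norm_num [hc₁def, hc₂def]
    ring
  have hV0 : 0 ≤ V 0 := by
    rw [hV0eq]; nlinarith
  constructor
  · -- main single-crossing statement
    by_cases hall : ∀ x : ℝ, 0 ≤ x → 0 ≤ V x
    · exact Or.inl hall
    right
    push_neg at hall
    obtain ⟨x₂', hx₂'0, hx₂'neg⟩ := hall
    -- set up g, P, N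
    set A1 : ℝ := θ₁ + θ₂ - a * lam₁ with hA1
    set A2 : ℝ := θ₁ + θ₂ - a * lam₂ with hA2
    set B3 : ℝ := θ₁ + θ₂ - a * (lam₁ + lam₂) with hB3
    set g : ℝ → ℝ := fun y => Real.exp (θ₂ * y) + Real.exp (θ₁ * y) - 1
      - c₁ * Real.exp (A1 * y) - c₂ * Real.exp (A2 * y) + c₁ * c₂ * Real.exp (B3 * y) with hgdef
    set P : ℝ → ℝ := fun y => θ₂ * Real.exp (θ₂ * y) + θ₁ * Real.exp (θ₁ * y)
      + (c₁ * c₂ * B3) * Real.exp (B3 * y) with hPdef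
    set N : ℝ → ℝ := fun y => (c₁ * A1) * Real.exp (A1 * y) + (c₂ * A2) * Real.exp (A2 * y)
      with hNdef
    have hgV : ∀ y : ℝ, g y = Real.exp ((θ₁ + θ₂) * y) * V y := by
      intro y
      have e1 : Real.exp (θ₂ * y) = Real.exp ((θ₁ + θ₂) * y) * Real.exp (-θ₁ * y) := by
        rw [← Real.exp_add]; congr 1; ring
      have e2 : Real.exp (θ₁ * y) = Real.exp ((θ₁ + θ₂) * y) * Real.exp (-θ₂ * y) := by
        rw [← Real.exp_add]; congr 1; ring
      have e3 : (1 : ℝ) = Real.exp ((θ₁ + θ₂) * y) * Real.exp (-(θ₁ + θ₂) * y) := by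
        rw [← Real.exp_add, show (θ₁ + θ₂) * y + -(θ₁ + θ₂) * y = 0 by ring, Real.exp_zero]
      have e4 : c₁ * Real.exp (A1 * y)
          = Real.exp ((θ₁ + θ₂) * y) * Real.exp (-lam₁ * (a * y + b)) := by
        rw [hc₁def, ← Real.exp_add, ← Real.exp_add]; congr 1; rw [hA1]; ring
      have e5 : c₂ * Real.exp (A2 * y)
          = Real.exp ((θ₁ + θ₂) * y) * Real.exp (-lam₂ * (a * y + b)) := by
        rw [hc₂def, ← Real.exp_add, ← Real.exp_add]; congr 1; rw [hA2]; ring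
      have e6 : c₁ * c₂ * Real.exp (B3 * y)
          = Real.exp ((θ₁ + θ₂) * y) * Real.exp (-(lam₁ + lam₂) * (a * y + b)) := by
        rw [hc₁def, hc₂def, ← Real.exp_add, ← Real.exp_add, ← Real.exp_add]
        congr 1; rw [hB3]; ring
      rw [hgdef, hV y]
      simp only []
      rw [e1, e2, e4, e5, e6]
      nth_rewrite 1 [e3]
      ring
    have hgderiv : ∀ y : ℝ, HasDerivAt g (P y - N y) y := by
      intro y
      have d1 := aux_exp' θ₂ y
      have d2 := aux_exp' θ₁ y
      have d4 := (aux_exp' A1 y).const_mul c₁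
      have d5 := (aux_exp' A2 y).const_mul c₂
      have d6 := (aux_exp' B3 y).const_mul (c₁ * c₂)
      have hd := ((((d1.add d2).sub_const 1).sub d4).sub d5).add d6
      have heq : P y - N y = θ₂ * Real.exp (θ₂ * y) + θ₁ * Real.exp (θ₁ * y)
          - c₁ * (A1 * Real.exp (A1 * y)) - c₂ * (A2 * Real.exp (A2 * y))
          + c₁ * c₂ * (B3 * Real.exp (B3 * y)) := by
        rw [hPdef, hNdef]; ring
      rw [heq]
      exact hd
    have hgcont : Continuous g := by
      rw [hgdef]; fun_prop
    -- exponent facts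
    have hB1A1 : θ₂ ≤ A1 := by rw [hA1]; nlinarith
    have hB1A2 : θ₂ ≤ A2 := by rw [hA2]; nlinarith
    have hB2A1 : θ₁ ≤ A1 := le_trans (by linarith) hB1A1
    have hB2A2 : θ₁ ≤ A2 := le_trans (by linarith) hB1A2
    have hB3A1 : B3 ≤ A1 := by rw [hB3, hA1]; nlinarith
    have hB3A2 : B3 ≤ A2 := by rw [hB3, hA2]; nlinarith
    have hB3nn : 0 ≤ B3 := by rw [hB3]; nlinarith
    have hA1pos : 0 < A1 := lt_of_lt_of_le hθ2 hB1A1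
    have hA2pos : 0 < A2 := lt_of_lt_of_le hθ2 hB1A2
    -- once P ≤ N, stays so
    have key : ∀ u v : ℝ, u ≤ v → P u ≤ N u → P v ≤ N v := by
      intro u v huv h
      have hNu : 0 < (c₁ * A1) * Real.exp (A1 * u) + (c₂ * A2) * Real.exp (A2 * u) :=
        add_pos (mul_pos (mul_pos hc₁pos hA1pos) (Real.exp_pos _))
          (mul_pos (mul_pos hc₂pos hA2pos) (Real.exp_pos _))
      have := ratio_mono' θ₂ θ₁ (c₁ * c₂ * B3) (c₁ * A1) (c₂ * A2) θ₂ θ₁ B3 A1 A2 u v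
        hθ2.le h0.le (by positivity) (by positivity) (by positivity)
        hB1A1 hB1A2 hB2A1 hB2A2 hB3A1 hB3A2 huv hNu (by rw [hPdef, hNdef] at h; exact h)
      rw [hPdef, hNdef]
      exact this
    -- construct the crossing point
    set S : Set ℝ := {x : ℝ | 0 ≤ x ∧ V x < 0} with hSdef
    have hSne : S.Nonempty := ⟨x₂', hx₂'0, hx₂'neg⟩
    have hSbdd : BddBelow S := ⟨0, fun x hx => hx.1⟩
    refine ⟨sInf S, le_csInf hSne (fun x hx => hx.1), fun x hx => ⟨?_, ?_⟩⟩
    · intro hxlt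
      by_contra hneg
      push_neg at hneg
      exact absurd (csInf_le hSbdd ⟨hx, hneg⟩) (not_le.2 hxlt)
    · intro hxgt
      by_contra hpos
      push_neg at hpos
      obtain ⟨x₂, hx₂S, hx₂lt⟩ := exists_lt_of_csInf_lt hSne hxgt
      obtain ⟨hx₂0, hx₂neg⟩ := hx₂S
      -- g-signs
      have hg0 : 0 ≤ g 0 := by
        rw [hgV 0]; positivity
      have hgx₂ : g x₂ < 0 := by
        rw [hgV x₂]
        exact mul_neg_of_pos_of_neg (Real.exp_pos _) hx₂neg
      have hgx : 0 < g x := by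
        rw [hgV x]
        exact mul_pos (Real.exp_pos _) hpos
      have hx₂pos : 0 < x₂ := by
        rcases lt_or_eq_of_le hx₂0 with h | h
        · exact h
        · exfalso; rw [← h] at hgx₂; linarith
      -- MVT on [0, x₂]
      obtain ⟨v, hvmem, hvslope⟩ := exists_hasDerivAt_eq_slope g (fun y => P y - N y) hx₂pos
        hgcont.continuousOn (fun y _ => hgderiv y)
      -- MVT on [x₂, x]
      obtain ⟨u, humem, huslope⟩ := exists_hasDerivAt_eq_slope g (fun y => P y - N y) hx₂lt
        hgcont.continuousOn (fun y _ => hgderiv y)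
      have hvle : P v ≤ N v := by
        have hs : (g x₂ - g 0) / (x₂ - 0) < 0 :=
          div_neg_of_neg_of_pos (by linarith) (by linarith)
        rw [← hvslope] at hs
        exact le_of_lt (sub_neg.mp hs)
      have hugt : 0 < P u - N u := by
        rw [huslope]
        exact div_pos (by linarith) (by linarith)
      have := key v u (le_of_lt (lt_trans hvmem.2 humem.1)) hvle
      linarith
  · -- V 0 > 0 when b > 0
    intro hbpos
    have hc₁lt : c₁ < 1 := by
      rw [hc₁def, Real.exp_lt_one_iff]; nlinarith
    have hc₂lt : c₂ < 1 := by
      rw [hc₂def, Real.exp_lt_one_iff]; nlinarith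
    rw [hV0eq]
    nlinarith
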